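/- Let Φ be a frame for H with lower frame bound A and let f ∈ H. If a ≥ 1/√A and 0 < δ < 1, then there exists N₀ such that for all N ≥ N₀, f has the (a,δ)-stable approximation property: there is z ∈ ℂᴺ with ‖f − T_N z‖ ≤ δ‖f‖ and ‖z‖ ≤ a‖f‖. -/

import Mathlib

open scoped ComplexInnerProductSpace

theorem stmt_18 {H : Type*} [NormedAddCommGroup H] [InnerProductSpace ℂ H] [CompleteSpace H]
    {ι : Type*} [Countable ι] (φ : ι → H) (A B : ℝ) (hA : 0 < A) (hAB : A ≤ B)
    (hsum : ∀ f : H, Summable fun n => ‖⟪φ n, f⟫‖ ^ 2)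
    (hframe : ∀ f : H, A * ‖f‖ ^ 2 ≤ ∑' n, ‖⟪φ n, f⟫‖ ^ 2 ∧
      ∑' n, ‖⟪φ n, f⟫‖ ^ 2 ≤ B * ‖f‖ ^ 2)
    (S : H ≃L[ℂ] H) (hS : ∀ f : H, HasSum (fun n => ⟪φ n, f⟫ • φ n) (S f))
    (I : ℕ → Finset ι) (hmono : Monotone I) (hcover : ∀ x : ι, ∃ N, x ∈ I N)
    (f : H) (a δ : ℝ) (ha : 1 / Real.sqrt A ≤ a) (hδ0 : 0 < δ) (hδ1 : δ < 1) :
    ∃ N₀ : ℕ, ∀ N ≥ N₀, ∃ z : ι → ℂ, (∀ n ∉ I N, z n = 0) ∧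
      ‖f - ∑ n ∈ I N, z n • φ n‖ ≤ δ * ‖f‖ ∧
      Real.sqrt (∑ n ∈ I N, ‖z n‖ ^ 2) ≤ a * ‖f‖ := by
  by_cases hf0 : f = 0
  · refine ⟨0, fun N _ => ⟨0, fun n _ => rfl, ?_, ?_⟩⟩ <;> simp [hf0]
  classical
  set g := S.symm f with hg
  have hSg : HasSum (fun n => ⟪φ n, g⟫ • φ n) f := by
    have := hS g
    rwa [S.apply_symm_apply] at this
  -- sum of squared coefficients equals re ⟪g, f⟫
  have h1 : HasSum (fun n => ⟪g, ⟪φ n, g⟫ • φ n⟫) ⟪g, f⟫ := (innerSL ℂ g).hasSum hSg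
  have h2 : HasSum (fun n => ((‖⟪φ n, g⟫‖ ^ 2 : ℝ) : ℂ)) ⟪g, f⟫ := by
    have key : ∀ n : ι, ⟪g, ⟪φ n, g⟫ • φ n⟫ = ((‖⟪φ n, g⟫‖ ^ 2 : ℝ) : ℂ) := by
      intro n
      have hcj : ⟪g, φ n⟫ = (starRingEnd ℂ) ⟪φ n, g⟫ := (inner_conj_symm _ _).symm
      rw [inner_smul_right, hcj, Complex.mul_conj, Complex.normSq_eq_norm_sq]
    simpa [key] using h1
  have hC : HasSum (fun n => ‖⟪φ n, g⟫‖ ^ 2) (⟪g, f⟫.re) := by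
    have := Complex.reCLM.hasSum h2
    simp only [Complex.reCLM_apply, Complex.ofReal_re] at this
    exact this
  set C := ∑' n, ‖⟪φ n, g⟫‖ ^ 2 with hCdef
  have hCeq : C = (⟪g, f⟫).re := hC.tsum_eq
  have hClow : A * ‖g‖ ^ 2 ≤ C := (hframe g).1
  have hCle : C ≤ ‖g‖ * ‖f‖ := by
    rw [hCeq]
    exact re_inner_le_norm (𝕜 := ℂ) g f
  have hC0 : 0 ≤ C := by
    rw [hCdef]
    exact tsum_nonneg fun n => sq_nonneg _
  have hCbound : C ≤ ‖f‖ ^ 2 / A := by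
    rcases eq_or_lt_of_le hC0 with h | h
    · rw [← h]; positivity
    · have hg2 : ‖g‖ ^ 2 ≤ C / A := by
        rw [le_div_iff₀ hA]; linarith [hClow]
      have : C ^ 2 ≤ (C / A) * ‖f‖ ^ 2 := by
        calc C ^ 2 ≤ (‖g‖ * ‖f‖) ^ 2 := by
              apply pow_le_pow_left₀ hC0 hCle
          _ = ‖g‖ ^ 2 * ‖f‖ ^ 2 := by ring
          _ ≤ (C / A) * ‖f‖ ^ 2 := by
              apply mul_le_mul_of_nonneg_right hg2 (sq_nonneg _)
      rw [div_mul_eq_mul_div, le_div_iff₀ hA] at this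
      calc C = C ^ 2 * A / (C * A) := by field_simp
        _ ≤ C * ‖f‖ ^ 2 / (C * A) := by
            apply div_le_div_of_nonneg_right ?_ (by positivity)
            nlinarith
        _ = ‖f‖ ^ 2 / A := by
            rw [mul_div_mul_left _ _ (ne_of_gt h)]
  -- convergence of the partial sums
  have htend : Filter.Tendsto (fun N => ∑ n ∈ I N, ⟪φ n, g⟫ • φ n)
      Filter.atTop (nhds f) :=
    hSg.comp (Filter.tendsto_atTop_finset_of_monotone hmono hcover)
  have hfpos : 0 < δ * ‖f‖ := mul_pos hδ0 (norm_pos_iff.mpr hf0)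
  have hev : ∀ᶠ N in Filter.atTop, ‖f - ∑ n ∈ I N, ⟪φ n, g⟫ • φ n‖ ≤ δ * ‖f‖ := by
    have := htend.eventually (Metric.ball_mem_nhds f hfpos)
    filter_upwards [this] with N hN
    have hd : dist (∑ n ∈ I N, ⟪φ n, g⟫ • φ n) f < δ * ‖f‖ := hN
    rw [dist_comm, dist_eq_norm] at hd
    exact le_of_lt hd
  obtain ⟨N₀, hN₀⟩ := Filter.eventually_atTop.mp hev
  refine ⟨N₀, fun N hN => ⟨fun n => if n ∈ I N then ⟪φ n, g⟫ else 0, fun n hn => if_neg hn,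
    ?_, ?_⟩⟩
  · have : ∑ n ∈ I N, (if n ∈ I N then ⟪φ n, g⟫ else 0) • φ n
        = ∑ n ∈ I N, ⟪φ n, g⟫ • φ n := by
      apply Finset.sum_congr rfl
      intro n hn; rw [if_pos hn]
    rw [this]
    exact hN₀ N hN
  · have hsumle : ∑ n ∈ I N, ‖(if n ∈ I N then ⟪φ n, g⟫ else 0)‖ ^ 2 ≤ C := by
      have : ∑ n ∈ I N, ‖(if n ∈ I N then ⟪φ n, g⟫ else 0)‖ ^ 2
          = ∑ n ∈ I N, ‖⟪φ n, g⟫‖ ^ 2 := by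
        apply Finset.sum_congr rfl
        intro n hn; rw [if_pos hn]
      rw [this, hCdef]
      exact Summable.sum_le_tsum (I N) (fun n _ => sq_nonneg _) (hsum g)
    have h1 : Real.sqrt (∑ n ∈ I N, ‖(if n ∈ I N then ⟪φ n, g⟫ else 0)‖ ^ 2)
        ≤ Real.sqrt (‖f‖ ^ 2 / A) :=
      Real.sqrt_le_sqrt (le_trans hsumle hCbound)
    refine le_trans h1 ?_
    rw [show ‖f‖ ^ 2 / A = (‖f‖ / Real.sqrt A) ^ 2 by
      rw [div_pow, Real.sq_sqrt hA.le]]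
    rw [Real.sqrt_sq (by positivity)]
    rw [div_eq_mul_one_div, mul_comm]
    exact mul_le_mul_of_nonneg_right ha (norm_nonneg f)
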